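/- If the regression function is additive, m(X) = Σ_k m_k(X^{(k)}), then the unnormalized marginal total Sobol index equals the variance of the j-th component function: E[Var(m(X_{π_j}) | X^{(-j)})] = Var(m_j(X^{(j)})). -/

import Mathlib

open MeasureTheory ProbabilityTheory
open scoped ENNReal NNReal

noncomputable section

/-- The σ-algebra generated by the components of `X` other than the `j`-th. -/
def sigmaWithout {Ω : Type*} [MeasurableSpace Ω] {p : ℕ} (X : Ω → Fin p → ℝ) (j : Fin p) :
    MeasurableSpace Ω :=
  MeasurableSpace.comap (fun ω => fun k : {k : Fin p // k ≠ j} => X ω (k : Fin p)) inferInstance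

/-- `X_{π_j}` : the vector `X` with its `j`-th component replaced by `X'`. -/
def permuted {Ω : Type*} {p : ℕ} (X : Ω → Fin p → ℝ) (j : Fin p) (X' : Ω → ℝ) :
    Ω → Fin p → ℝ :=
  fun ω => Function.update (X ω) j (X' ω)

/-- If the regression function is additive, `m(x) = ∑ₖ mₖ(x⁽ᵏ⁾)`, then the unnormalized
marginal total Sobol index `E[Var(m(X_{π_j}) | X^{(-j)})]` equals `Var(m_j(X^{(j)}))`. -/
theorem marginal_total_sobol_of_additive
    {Ω : Type*} [MeasureSpace Ω] [IsProbabilityMeasure (ℙ : Measure Ω)]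
    {p : ℕ} (j : Fin p) (X : Ω → Fin p → ℝ) (X' : Ω → ℝ)
    (mk : Fin p → ℝ → ℝ) (hmk : ∀ k, Measurable (mk k))
    (hL2 : ∀ k, MemLp (fun ω => mk k (X ω k)) 2 ℙ)
    (hX : Measurable X) (hX' : Measurable X')
    -- `X'` is an independent copy of the `j`-th component of `X`
    (hcopy : Measure.map X' ℙ = Measure.map (fun ω => X ω j) ℙ)
    (hindep : IndepFun X' X ℙ) :
    ∫ ω, ((∑ k, mk k (permuted X j X' ω k))
        - (ℙ[fun ω' => ∑ k, mk k (permuted X j X' ω' k) | sigmaWithout X j]) ω) ^ 2 ∂ℙ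
      = variance (fun ω => mk j (X ω j)) ℙ := by
  classical
  have hXj : Measurable (fun ω => X ω j) := (measurable_pi_apply j).comp hX
  set h : Ω → ℝ := fun ω => mk j (X' ω) with hhdef
  set g : Ω → ℝ := fun ω => ∑ k ∈ Finset.univ.erase j, mk k (X ω k) with hgdef
  -- decomposition of the sum
  have hsum : (fun ω => ∑ k, mk k (permuted X j X' ω k)) = fun ω => h ω + g ω := by
    funext ω
    rw [← Finset.add_sum_erase _ _ (Finset.mem_univ j)]
    congr 1
    · simp [permuted, hhdef]
    · refine Finset.sum_congr rfl fun k hk => ?_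
      have hk' : k ≠ j := (Finset.mem_erase.1 hk).1
      simp [permuted, Function.update_apply, hk']
  -- Memℒp facts
  have hh2 : MemLp h 2 ℙ := by
    have h1 : MemLp (mk j) 2 (Measure.map (fun ω => X ω j) ℙ) :=
      (memLp_map_measure_iff (hmk j).aestronglyMeasurable hXj.aemeasurable).2 (hL2 j)
    rw [← hcopy] at h1
    exact (memLp_map_measure_iff (hmk j).aestronglyMeasurable hX'.aemeasurable).1 h1
  have hg2 : MemLp g 2 ℙ :=
    memLp_finset_sum (Finset.univ.erase j) (fun k _ => hL2 k)
  have hhint : Integrable h ℙ := hh2.integrable one_le_two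
  have hgint : Integrable g ℙ := hg2.integrable one_le_two
  -- σ-algebra inequalities
  have hmφ : Measurable (fun ω => fun k : {k : Fin p // k ≠ j} => X ω (k : Fin p)) :=
    measurable_pi_lambda _ fun k => (measurable_pi_apply (k : Fin p)).comp hX
  have hG : sigmaWithout X j ≤ (inferInstance : MeasurableSpace Ω) := hmφ.comap_le
  haveI hsf : SigmaFinite ((ℙ : Measure Ω).trim hG) := by
    have : IsFiniteMeasure ((ℙ : Measure Ω).trim hG) := isFiniteMeasure_trim hG
    infer_instance
  have hGleX : sigmaWithout X j ≤ MeasurableSpace.comap X inferInstance := by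
    rw [sigmaWithout,
      show (fun ω => fun k : {k : Fin p // k ≠ j} => X ω (k : Fin p))
        = (fun v : Fin p → ℝ => fun k : {k : Fin p // k ≠ j} => v (k : Fin p)) ∘ X from rfl,
      ← MeasurableSpace.comap_comp]
    have hψ : Measurable (fun v : Fin p → ℝ => fun k : {k : Fin p // k ≠ j} => v (k : Fin p)) :=
      measurable_pi_lambda _ fun k => measurable_pi_apply _
    exact MeasurableSpace.comap_mono hψ.comap_le
  -- g is G-measurable
  have hφ : Measurable[sigmaWithout X j]
      (fun ω => fun k : {k : Fin p // k ≠ j} => X ω (k : Fin p)) :=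
    measurable_iff_comap_le.2 le_rfl
  have hgmeas : StronglyMeasurable[sigmaWithout X j] g := by
    refine Measurable.stronglyMeasurable ?_
    refine Finset.measurable_sum _ fun k hk => ?_
    have hk' : k ≠ j := (Finset.mem_erase.1 hk).1
    have hXk : Measurable[sigmaWithout X j] fun ω => X ω k :=
      (measurable_pi_apply (⟨k, hk'⟩ : {k : Fin p // k ≠ j})).comp hφ
    exact (hmk k).comp hXk
  -- independence of h from G
  have hind : Indep (MeasurableSpace.comap X' inferInstance) (sigmaWithout X j) ℙ := by
    have := (IndepFun_iff_Indep X' X ℙ).1 hindep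
    exact indep_of_indep_of_le_right this hGleX
  have hhmeas : StronglyMeasurable[MeasurableSpace.comap X' inferInstance] h :=
    ((hmk j).comp (measurable_iff_comap_le.2 le_rfl)).stronglyMeasurable
  -- conditional expectations
  have hcg : (ℙ : Measure Ω)[g | sigmaWithout X j] =ᵐ[ℙ] g := by
    rw [condExp_of_stronglyMeasurable hG hgmeas hgint]
  have hch : (ℙ : Measure Ω)[h | sigmaWithout X j] =ᵐ[ℙ] fun _ => ∫ ω, h ω ∂ℙ :=
    condExp_indep_eq hX'.comap_le hG hhmeas hind
  have hcsum : (ℙ : Measure Ω)[fun ω' => ∑ k, mk k (permuted X j X' ω' k) | sigmaWithout X j]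
      =ᵐ[ℙ] fun ω => (∫ ω', h ω' ∂ℙ) + g ω := by
    rw [hsum]
    calc (ℙ : Measure Ω)[fun ω => h ω + g ω | sigmaWithout X j]
        =ᵐ[ℙ] (ℙ : Measure Ω)[h | sigmaWithout X j] + (ℙ : Measure Ω)[g | sigmaWithout X j] :=
          condExp_add hhint hgint _
      _ =ᵐ[ℙ] fun ω => (∫ ω', h ω' ∂ℙ) + g ω := hch.add hcg
  -- the constant
  set c : ℝ := ∫ ω, mk j (X ω j) ∂ℙ with hcdef
  have hc : (∫ ω, h ω ∂ℙ) = c := by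
    rw [hhdef, hcdef]
    calc ∫ ω, mk j (X' ω) ∂ℙ = ∫ t, mk j t ∂(Measure.map X' ℙ) :=
          (integral_map hX'.aemeasurable (hmk j).aestronglyMeasurable).symm
      _ = ∫ t, mk j t ∂(Measure.map (fun ω => X ω j) ℙ) := by rw [hcopy]
      _ = ∫ ω, mk j (X ω j) ∂ℙ := integral_map hXj.aemeasurable (hmk j).aestronglyMeasurable
  -- rewrite the integrand a.e.
  have hae : (fun ω => ((∑ k, mk k (permuted X j X' ω k))
        - ((ℙ : Measure Ω)[fun ω' => ∑ k, mk k (permuted X j X' ω' k) | sigmaWithout X j]) ω) ^ 2)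
      =ᵐ[ℙ] fun ω => (h ω - c) ^ 2 := by
    filter_upwards [hcsum] with ω hω
    rw [hω, show (∑ k, mk k (permuted X j X' ω k)) = h ω + g ω from congrFun hsum ω, hc]
    ring
  rw [integral_congr_ae hae]
  -- compare with variance via pushforward
  have hmeas2 : Measurable fun t => (mk j t - c) ^ 2 := ((hmk j).sub measurable_const).pow_const 2
  have hint_eq : ∫ ω, (h ω - c) ^ 2 ∂ℙ = ∫ ω, (mk j (X ω j) - c) ^ 2 ∂ℙ := by
    calc ∫ ω, (h ω - c) ^ 2 ∂ℙ = ∫ t, (mk j t - c) ^ 2 ∂(Measure.map X' ℙ) :=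
          (integral_map hX'.aemeasurable hmeas2.aestronglyMeasurable).symm
      _ = ∫ t, (mk j t - c) ^ 2 ∂(Measure.map (fun ω => X ω j) ℙ) := by rw [hcopy]
      _ = ∫ ω, (mk j (X ω j) - c) ^ 2 ∂ℙ :=
          integral_map hXj.aemeasurable hmeas2.aestronglyMeasurable
  rw [hint_eq, variance_eq_integral (hL2 j).aestronglyMeasurable.aemeasurable]
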